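/- For the 4×2 feature matrix X with rows (0,-2), (0,1), (-1,0), (2,0) and reward r = (9,8,7,6), no vector w ∈ ℝ^2 exists such that Xw preserves the order of r (i.e., such that (Xw)(1) > (Xw)(2) > (Xw)(3) > (Xw)(4)). -/

import Mathlib

open Matrix

theorem example_two_no_order_preserving_direction :
    let X : Matrix (Fin 4) (Fin 2) ℝ := !![0, -2; 0, 1; -1, 0; 2, 0]
    let r : Fin 4 → ℝ := ![9, 8, 7, 6]
    ¬ ∃ w : Fin 2 → ℝ, ∀ i j : Fin 4, r i > r j ↔ (X *ᵥ w) i > (X *ᵥ w) j := by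
  intro X r
  rintro ⟨w, h⟩
  have h01 := (h 0 1).mp (by norm_num [r])
  have h12 := (h 1 2).mp (by show (8:ℝ) > 7; norm_num)
  have h23 := (h 2 3).mp (by show (7:ℝ) > 6; norm_num)
  simp [X, mulVec, dotProduct, Fin.sum_univ_succ] at h01 h12 h23
  linarith
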